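/- Let R be a ring, A an R-algebra, I an ideal of A such that A/I is a finitely generated R-module, and M a finitely generated A-module. If the associated graded module gr_I(M) is flat over R, then for every finitely generated R-module N and every n ≥ 0, the canonical map (I^n M) ⊗_R N → I^n (M ⊗_R N) is an isomorphism of A-modules. -/

import Mathlib

open TensorProduct

theorem flat_quotient_rTensor_aux
    {R P N F : Type*} [CommRing R] [AddCommGroup P] [Module R P]
    [AddCommGroup N] [Module R N] [AddCommGroup F] [Module R F]
    [Module.Flat R F] (K : Submodule R P) [Module.Flat R (P ⧸ K)]
    (p : F →ₗ[R] N) (hp : Function.Surjective p) :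
    Function.Injective (LinearMap.rTensor N K.subtype) := by
  open LinearMap in
  set L := LinearMap.ker p with hLdef
  have hexact : Function.Exact L.subtype p := p.exact_subtype_ker_map
  rw [injective_iff_map_eq_zero]
  intro x hx
  obtain ⟨x', rfl⟩ := lTensor_surjective (↥K) hp x
  set u := rTensor F K.subtype x' with hu
  have hu0 : lTensor P p u = 0 := by
    rw [hu, ← LinearMap.comp_apply, lTensor_comp_rTensor, ← rTensor_comp_lTensor,
      LinearMap.comp_apply, hx]
  obtain ⟨y, hy⟩ := (lTensor_exact P hexact hp u).mp hu0
  have hq0 : lTensor (P ⧸ K) L.subtype (rTensor L K.mkQ y) = 0 := by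
    rw [← LinearMap.comp_apply, lTensor_comp_rTensor, ← rTensor_comp_lTensor,
      LinearMap.comp_apply, hy, hu, ← LinearMap.comp_apply, ← rTensor_comp]
    have h0 : K.mkQ.comp K.subtype = 0 := by ext k; simp
    rw [h0, rTensor_zero, LinearMap.zero_apply]
  have hy0 : rTensor L K.mkQ y = 0 := by
    apply Module.Flat.lTensor_preserves_injective_linearMap (M := P ⧸ K) L.subtype
      L.injective_subtype
    rw [hq0, map_zero]
  obtain ⟨z, hz⟩ := (rTensor_exact L (LinearMap.exact_subtype_mkQ K)
    (Submodule.mkQ_surjective K) y).mp hy0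
  have hx' : x' = lTensor (↥K) L.subtype z := by
    apply Module.Flat.rTensor_preserves_injective_linearMap (M := F) K.subtype
      K.injective_subtype
    rw [← LinearMap.comp_apply, rTensor_comp_lTensor, ← lTensor_comp_rTensor,
      LinearMap.comp_apply, hz, hy]
  rw [hx', ← LinearMap.comp_apply, ← lTensor_comp]
  have h0 : p.comp L.subtype = 0 := by ext k; exact k.2
  rw [h0, lTensor_zero, LinearMap.zero_apply]

/-- If `P ⧸ K` is flat, then `K ⊗ N → P ⊗ N` is injective. -/
theorem flat_quotient_rTensor_subtype_injective
    {R P N : Type*} [CommRing R] [AddCommGroup P] [Module R P]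
    [AddCommGroup N] [Module R N] (K : Submodule R P)
    [Module.Flat R (P ⧸ K)] :
    Function.Injective (LinearMap.rTensor N K.subtype) :=
  flat_quotient_rTensor_aux K (Finsupp.linearCombination R (id : N → N))
    (fun x => ⟨Finsupp.single x 1, by simp⟩)

/-- Lemma on isomorphism `(IⁿM) ⊗_R N ≅ Iⁿ(M ⊗_R N)`: if `A/I` is a finite `R`-module, `M` a
finite `A`-module with `gr_I(M)` flat over `R` (i.e. every graded piece `IⁿM/Iⁿ⁺¹M` is a flat
`R`-module), then for every finite `R`-module `N` and every `n`, the canonical map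
`(IⁿM) ⊗_R N → M ⊗_R N` is injective with image `Iⁿ(M ⊗_R N)`; that is, it induces an
isomorphism `(IⁿM) ⊗_R N ≅ Iⁿ(M ⊗_R N)`. -/
theorem graded_flat_tensor_iso
    (R A M N : Type*) [CommRing R] [CommRing A] [Algebra R A]
    [IsNoetherianRing R] [IsNoetherianRing A]
    [AddCommGroup M] [Module A M] [Module R M] [IsScalarTower R A M]
    [AddCommGroup N] [Module R N]
    (I : Ideal A) (hfinq : Module.Finite R (A ⧸ I)) [Module.Finite A M]
    (hflat : ∀ n : ℕ, Module.Flat R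
      (↥((I ^ n • (⊤ : Submodule A M)).restrictScalars R) ⧸
        Submodule.comap ((I ^ n • (⊤ : Submodule A M)).restrictScalars R).subtype
          ((I ^ (n + 1) • (⊤ : Submodule A M)).restrictScalars R)))
    [Module.Finite R N] (n : ℕ) :
    Function.Injective
      (TensorProduct.map (((I ^ n • (⊤ : Submodule A M)).restrictScalars R).subtype)
        (LinearMap.id (R := R) (M := N))) ∧
    LinearMap.range
      (TensorProduct.map (((I ^ n • (⊤ : Submodule A M)).restrictScalars R).subtype)
        (LinearMap.id (R := R) (M := N)))
      = (I ^ n • (⊤ : Submodule A (M ⊗[R] N))).restrictScalars R := by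
  constructor
  · -- injectivity, by induction on n
    induction n with
    | zero =>
      have h0 : (I ^ 0 • (⊤ : Submodule A M)).restrictScalars R = ⊤ := by
        rw [pow_zero, one_smul]; rfl
      rw [h0]
      set g : M →ₗ[R] (⊤ : Submodule R M) :=
        LinearMap.codRestrict ⊤ LinearMap.id (fun _ => Submodule.mem_top) with hg
      have hli : Function.LeftInverse
          (TensorProduct.map g (LinearMap.id (R := R) (M := N)))
          (TensorProduct.map (⊤ : Submodule R M).subtype (LinearMap.id (R := R) (M := N))) := by
        intro t
        rw [← LinearMap.comp_apply, ← TensorProduct.map_comp]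
        have h1 : g ∘ₗ (⊤ : Submodule R M).subtype = LinearMap.id := by ext x; rfl
        rw [h1, LinearMap.id_comp, TensorProduct.map_id, LinearMap.id_apply]
      exact hli.injective
    | succ n ih =>
      set P := (I ^ n • (⊤ : Submodule A M)).restrictScalars R with hP
      set K := Submodule.comap P.subtype ((I ^ (n + 1) • (⊤ : Submodule A M)).restrictScalars R)
        with hK
      haveI : Module.Flat R (↥P ⧸ K) := hflat n
      have hKinj : Function.Injective
          (TensorProduct.map K.subtype (LinearMap.id (R := R) (M := N))) :=
        flat_quotient_rTensor_subtype_injective (N := N) K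
      have hle : (I ^ (n + 1) • (⊤ : Submodule A M)).restrictScalars R ≤ P := by
        intro x hx
        exact Submodule.smul_mono_left (Ideal.pow_le_pow_right (Nat.le_succ n)) hx
      set e := Submodule.comapSubtypeEquivOfLe hle with he
      have hcomp : ((I ^ (n + 1) • (⊤ : Submodule A M)).restrictScalars R).subtype ∘ₗ
          (e : K →ₗ[R] ((I ^ (n + 1) • (⊤ : Submodule A M)).restrictScalars R)) =
          P.subtype ∘ₗ K.subtype := by
        ext x; rfl
      have hsurj : Function.Surjective
          (TensorProduct.map
            (e : K →ₗ[R] ((I ^ (n + 1) • (⊤ : Submodule A M)).restrictScalars R))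
            (LinearMap.id (R := R) (M := N))) := by
        intro t
        induction t using TensorProduct.induction_on with
        | zero => exact ⟨0, map_zero _⟩
        | tmul x y => exact ⟨e.symm x ⊗ₜ y, by simp⟩
        | add t₁ t₂ h₁ h₂ =>
          obtain ⟨a, rfl⟩ := h₁
          obtain ⟨b, rfl⟩ := h₂
          exact ⟨a + b, map_add _ _ _⟩
      intro a b hab
      obtain ⟨a', rfl⟩ := hsurj a
      obtain ⟨b', rfl⟩ := hsurj b
      have key : TensorProduct.map
            (((I ^ (n + 1) • (⊤ : Submodule A M)).restrictScalars R).subtype)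
            (LinearMap.id (R := R) (M := N)) ∘ₗ
          TensorProduct.map (e : K →ₗ[R] _) (LinearMap.id (R := R) (M := N)) =
          TensorProduct.map P.subtype (LinearMap.id (R := R) (M := N)) ∘ₗ
          TensorProduct.map K.subtype (LinearMap.id (R := R) (M := N)) := by
        rw [← TensorProduct.map_comp, ← TensorProduct.map_comp, hcomp]
      have hab' : (TensorProduct.map P.subtype (LinearMap.id (R := R) (M := N)) ∘ₗ
          TensorProduct.map K.subtype (LinearMap.id (R := R) (M := N))) a' =
          (TensorProduct.map P.subtype (LinearMap.id (R := R) (M := N)) ∘ₗ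
          TensorProduct.map K.subtype (LinearMap.id (R := R) (M := N))) b' := by
        rw [← key, LinearMap.comp_apply, LinearMap.comp_apply, hab]
      have h2 : a' = b' := by
        apply hKinj
        apply ih
        simpa [LinearMap.comp_apply] using hab'
      rw [h2]
  · -- range computation
    apply le_antisymm
    · rintro t ⟨s, rfl⟩
      induction s using TensorProduct.induction_on with
      | zero => simp
      | tmul x y =>
        rw [TensorProduct.map_tmul]
        have claim : ∀ z : M, z ∈ I ^ n • (⊤ : Submodule A M) →
            z ⊗ₜ[R] (LinearMap.id (R := R) (M := N)) y ∈
              (I ^ n • (⊤ : Submodule A (M ⊗[R] N))).restrictScalars R := by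
          intro z hz
          refine Submodule.smul_induction_on
            (p := fun z => z ⊗ₜ[R] (LinearMap.id (R := R) (M := N)) y ∈
              (I ^ n • (⊤ : Submodule A (M ⊗[R] N))).restrictScalars R)
            hz (fun a ha m _ => ?_) (fun p q hp hq => ?_)
          · rw [Submodule.restrictScalars_mem, ← TensorProduct.smul_tmul']
            exact Submodule.smul_mem_smul ha Submodule.mem_top
          · rw [TensorProduct.add_tmul]
            exact add_mem hp hq
        exact claim x x.2
      | add s₁ s₂ h₁ h₂ =>
        rw [map_add]
        exact add_mem h₁ h₂
    · intro t ht
      rw [Submodule.restrictScalars_mem] at ht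
      refine Submodule.smul_induction_on ht (fun a ha s hs => ?_) (fun p q hp hq => add_mem hp hq)
      clear hs
      induction s using TensorProduct.induction_on with
      | zero => rw [smul_zero]; exact zero_mem _
      | tmul m y =>
        refine LinearMap.mem_range.mpr ⟨(⟨a • m, (Submodule.restrictScalars_mem R _ _).mpr
            (Submodule.smul_mem_smul ha Submodule.mem_top)⟩ :
          ((I ^ n • (⊤ : Submodule A M)).restrictScalars R)) ⊗ₜ y, ?_⟩
        rw [TensorProduct.map_tmul]
        simp [TensorProduct.smul_tmul']
      | add s₁ s₂ h₁ h₂ =>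
        rw [smul_add]
        exact add_mem h₁ h₂
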